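/- Let I be an SNSAT2 instance and C the implicit CGS constructed from it (as described in the context), with formulas ψ_0 = ⊤ and ψ_{k+1} = ⟨Coal⟩ (¬s) U (s_⊤ ∨ EX(s ∧ EX ¬ψ_k)), where Coal = {A_1^1,...,A_m^n, C_1,...,C_m} and E = ⟨Agt⟩. Let f_I be the memoryless strategy in which every Boolean agent of Coal plays according to the valuation v_I. Then for every i ≤ m and k ≥ i, the following are equivalent: (a) C, q_i ⊨ ψ_k; (b) the strategies f_I witness C, q_i ⊨ ψ_k; (c) the variable z_i evaluates to ⊤ in v_I. -/

import Mathlib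

/-!  Core formalization of concurrent game structures (CGS), alternating
transition systems (ATS), and the logic ATL, following Alur-Henzinger-Kupferman
and Laroussinie-Markey-Oreiby, "On the Expressiveness and Complexity of ATL".

A generic "game structure" `GS Agt Loc P M` has locations labelled by atomic
propositions from `P`, and in each location each agent has a set of available
moves (of type `M`); a joint move (one move per agent) leads to a set of
possible successor locations (a singleton for CGSs, the intersection of the
chosen sets for ATSs). -/

structure GS (Agt Loc P M : Type) where
  lab : Loc → Set P
  mov : Loc → Agt → Set M
  step : Loc → (Agt → M) → Set Loc

namespace GS

variable {Agt Loc P M : Type}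

/-- a complete joint move, valid at `ℓ`. -/
def ValidMove (S : GS Agt Loc P M) (ℓ : Loc) (m : Agt → M) : Prop :=
  ∀ a, m a ∈ S.mov ℓ a

/-- `Next ℓ A mA`: locations reachable from `ℓ` when each member `a` of the
coalition `A` plays `mA a` (and the other agents play arbitrary valid moves). -/
def Next (S : GS Agt Loc P M) (ℓ : Loc) (A : Set Agt) (mA : Agt → M) : Set Loc :=
  {ℓ' | ∃ m, S.ValidMove ℓ m ∧ (∀ a ∈ A, m a = mA a) ∧ ℓ' ∈ S.step ℓ m}

/-- all possible successors of `ℓ`. -/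
def NextAll (S : GS Agt Loc P M) (ℓ : Loc) : Set Loc :=
  {ℓ' | ∃ m, S.ValidMove ℓ m ∧ ℓ' ∈ S.step ℓ m}

/-- the controllable predecessors: `ℓ ∈ CPre A T` iff coalition `A` has a move
forcing the next location to be in `T`. -/
def CPre (S : GS Agt Loc P M) (A : Set Agt) (T : Set Loc) : Set Loc :=
  {ℓ | ∃ mA : Agt → M, (∀ a ∈ A, mA a ∈ S.mov ℓ a) ∧ S.Next ℓ A mA ⊆ T}

theorem cpre_mono (S : GS Agt Loc P M) (A : Set Agt) : Monotone (S.CPre A) := by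
  intro T T' h ℓ hℓ
  obtain ⟨mA, hv, hn⟩ := hℓ
  exact ⟨mA, hv, hn.trans h⟩

/-- A strategy maps the (strict) past history and current location to a move
for each agent (only the moves of the coalition members are relevant). -/
def Strat (Agt Loc M : Type) : Type := List Loc → Loc → Agt → M

def StratValid (S : GS Agt Loc P M) (A : Set Agt) (F : Strat Agt Loc M) : Prop :=
  ∀ h ℓ a, a ∈ A → F h ℓ a ∈ S.mov ℓ a

/-- a strategy is memoryless (state-based) if it only depends on the current
location. -/
def Memoryless (F : Strat Agt Loc M) : Prop :=
  ∀ h h' ℓ a, F h ℓ a = F h' ℓ a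

/-- the history `ρ 0, …, ρ (i-1)`. -/
def hist (ρ : ℕ → Loc) (i : ℕ) : List Loc := List.ofFn (fun j : Fin i => ρ j)

/-- computations from `ℓ`. -/
def Comp (S : GS Agt Loc P M) (ℓ : Loc) (ρ : ℕ → Loc) : Prop :=
  ρ 0 = ℓ ∧ ∀ i, ρ (i + 1) ∈ S.NextAll (ρ i)

/-- the outcomes of a strategy `F` of coalition `A` from `ℓ`. -/
def Out (S : GS Agt Loc P M) (A : Set Agt) (ℓ : Loc) (F : Strat Agt Loc M)
    (ρ : ℕ → Loc) : Prop :=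
  ρ 0 = ℓ ∧ ∀ i, ρ (i + 1) ∈ S.Next (ρ i) A (F (hist ρ i) (ρ i))

end GS

/-! ### ATL syntax and semantics -/

mutual
  /-- ATL state formulas. -/
  inductive SForm (Agt P : Type) : Type where
    | tru : SForm Agt P
    | atom : P → SForm Agt P
    | snot : SForm Agt P → SForm Agt P
    | sor : SForm Agt P → SForm Agt P → SForm Agt P
    | coal : Set Agt → PForm Agt P → SForm Agt P
  /-- ATL path formulas. -/
  inductive PForm (Agt P : Type) : Type where
    | pnot : PForm Agt P → PForm Agt P
    | nxt : SForm Agt P → PForm Agt P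
    | untl : SForm Agt P → SForm Agt P → PForm Agt P
end

mutual
  /-- satisfaction of an ATL state formula at a location. -/
  def SSat {Agt Loc P M : Type} (S : GS Agt Loc P M) : SForm Agt P → Loc → Prop
    | .tru, _ => True
    | .atom p, ℓ => p ∈ S.lab ℓ
    | .snot φ, ℓ => ¬ SSat S φ ℓ
    | .sor φ ψ, ℓ => SSat S φ ℓ ∨ SSat S ψ ℓ
    | .coal A φ, ℓ =>
        ∃ F : GS.Strat Agt Loc M, S.StratValid A F ∧
          ∀ ρ : ℕ → Loc, S.Out A ℓ F ρ → PSat S φ ρ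
  /-- satisfaction of an ATL path formula along a sequence of locations. -/
  def PSat {Agt Loc P M : Type} (S : GS Agt Loc P M) : PForm Agt P → (ℕ → Loc) → Prop
    | .pnot φ, ρ => ¬ PSat S φ ρ
    | .nxt φ, ρ => SSat S φ (ρ 1)
    | .untl φ ψ, ρ => ∃ i, SSat S ψ (ρ i) ∧ ∀ j < i, SSat S φ (ρ j)
end

/-- the release modality:  `φ R ψ := ¬((¬φ) U (¬ψ))`. -/
def PForm.rel {Agt P : Type} (φ ψ : SForm Agt P) : PForm Agt P :=
  .pnot (.untl φ.snot ψ.snot)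

/-- the weak-until modality:  `φ W ψ := ψ R (φ ∨ ψ)`. -/
def PForm.wuntl {Agt P : Type} (φ ψ : SForm Agt P) : PForm Agt P :=
  PForm.rel ψ (φ.sor ψ)

/-- conjunction of state formulas. -/
def SForm.sand {Agt P : Type} (φ ψ : SForm Agt P) : SForm Agt P :=
  .snot (.sor φ.snot ψ.snot)

/-- the set of locations satisfying a state formula. -/
def SatSet {Agt Loc P M : Type} (S : GS Agt Loc P M) (φ : SForm Agt P) : Set Loc :=
  {ℓ | SSat S φ ℓ}

/-! ### Concurrent game structures (explicit) and alternating transition systems -/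

/-- an (explicit) concurrent game structure: moves are natural numbers, and the
transition table gives the successor of each joint move. -/
structure CGS (Agt Loc P : Type) where
  lab : Loc → Set P
  chc : Loc → Agt → Finset ℕ
  edg : Loc → (Agt → ℕ) → Loc

namespace CGS

variable {Agt Loc P : Type}

def WellFormed (G : CGS Agt Loc P) : Prop := ∀ ℓ a, (G.chc ℓ a).Nonempty

def toGS (G : CGS Agt Loc P) : GS Agt Loc P ℕ where
  lab := G.lab
  mov ℓ a := ↑(G.chc ℓ a)
  step ℓ m := {G.edg ℓ m}

/-- a CGS is turn-based if in every location at most one agent has more than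
one available move. -/
def TurnBased (G : CGS Agt Loc P) : Prop :=
  ∀ ℓ (a b : Agt), 1 < (G.chc ℓ a).card → 1 < (G.chc ℓ b).card → a = b

end CGS

/-- an alternating transition system: a move of an agent is a set of locations;
a joint move leads to the intersection of the chosen sets (a singleton when the
ATS is well-formed). -/
structure ATS (Agt Loc P : Type) where
  lab : Loc → Set P
  chc : Loc → Agt → Set (Set Loc)

namespace ATS

variable {Agt Loc P : Type}

/-- well-formedness: each agent always has some available move, and each joint
choice of moves intersects in a singleton. -/
def WellFormed (T : ATS Agt Loc P) : Prop :=
  (∀ ℓ a, (T.chc ℓ a).Nonempty) ∧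
  ∀ ℓ (Q : Agt → Set Loc), (∀ a, Q a ∈ T.chc ℓ a) → ∃ ℓ', (⋂ a, Q a) = {ℓ'}

def toGS (T : ATS Agt Loc P) : GS Agt Loc P (Set Loc) where
  lab := T.lab
  mov := T.chc
  step _ Q := ⋂ a, Q a

end ATS

/-! ### Implicit concurrent game structures -/

/-- boolean formulas over atoms `A_j = c` ("agent `A_j` plays move `c`"). -/
inductive MoveForm (Agt : Type) : Type where
  | tt : MoveForm Agt
  | ff : MoveForm Agt
  | isEq : Agt → ℕ → MoveForm Agt
  | neg : MoveForm Agt → MoveForm Agt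
  | conj : MoveForm Agt → MoveForm Agt → MoveForm Agt
  | disj : MoveForm Agt → MoveForm Agt → MoveForm Agt

/-- evaluation of a move formula under a joint move. -/
def MoveForm.eval {Agt : Type} (m : Agt → ℕ) : MoveForm Agt → Bool
  | .tt => true
  | .ff => false
  | .isEq a c => m a == c
  | .neg φ => ! φ.eval m
  | .conj φ ψ => φ.eval m && ψ.eval m
  | .disj φ ψ => φ.eval m || ψ.eval m

/-- an implicit CGS: in each location, the transition function is given by a
finite list of guarded targets `(φ, ℓ')`; the successor under a joint move is
the target of the first guard that evaluates to true. -/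
structure ICGS (Agt Loc P : Type) where
  lab : Loc → Set P
  chc : Loc → Agt → Finset ℕ
  trans : Loc → List (MoveForm Agt × Loc)

namespace ICGS

variable {Agt Loc P : Type}

/-- the transition function determined by the guarded lists. -/
def edg (G : ICGS Agt Loc P) (ℓ : Loc) (m : Agt → ℕ) : Loc :=
  match (G.trans ℓ).find? (fun e => e.1.eval m) with
  | some e => e.2
  | none => ℓ

def toCGS (G : ICGS Agt Loc P) : CGS Agt Loc P :=
  ⟨G.lab, G.chc, G.edg⟩

def toGS (G : ICGS Agt Loc P) : GS Agt Loc P ℕ := G.toCGS.toGS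

/-- well-formedness: every agent always has an available move, and in each
location the last guard of the transition list is `⊤` (hence no joint move can
produce a deadlock). -/
def WellFormed (G : ICGS Agt Loc P) : Prop :=
  (∀ ℓ a, (G.chc ℓ a).Nonempty) ∧
  ∀ ℓ, ∃ ℓ' : Loc, (G.trans ℓ).getLast? = some (MoveForm.tt, ℓ')

end ICGS

/-! ### Boolean formulas (for QBF-style instances) -/

/-- boolean formulas over a set `V` of variables. -/
inductive BForm (V : Type) : Type where
  | var : V → BForm V
  | bnot : BForm V → BForm V
  | band : BForm V → BForm V → BForm V
  | bor : BForm V → BForm V → BForm V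

/-- evaluation of a boolean formula under a valuation. -/
def BForm.eval {V : Type} (g : V → Bool) : BForm V → Bool
  | .var v => g v
  | .bnot φ => ! φ.eval g
  | .band φ ψ => φ.eval g && ψ.eval g
  | .bor φ ψ => φ.eval g || ψ.eval g

/-- substituting a move formula for each variable. -/
def BForm.subst {V Agt : Type} (σ : V → MoveForm Agt) : BForm V → MoveForm Agt
  | .var v => σ v
  | .bnot φ => .neg (φ.subst σ)
  | .band φ ψ => .conj (φ.subst σ) (ψ.subst σ)
  | .bor φ ψ => .disj (φ.subst σ) (ψ.subst σ)

/-! ### Statement 15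

The implicit CGS associated with an SNSAT₂ instance
`z_i := ∃X_i. ∀Y_i. φ_i(z_0,…,z_{i-1}, X_i, Y_i)` (`i < m`, each family of
size `n`), and the `Δ₃`-hardness formulas
`ψ_0 = ⊤`, `ψ_{k+1} = ⟨Coal⟩ (¬s) U (s_⊤ ∨ EX(s ∧ EX ¬ψ_k))`. -/

/-- agents: `A_i^j`, `B_i^j`, `C_i`, and `D`. -/
abbrev SnAgt (m n : ℕ) : Type := ((Fin m × Fin n) ⊕ (Fin m × Fin n)) ⊕ (Fin m ⊕ Unit)
/-- locations: `q_i`, `q̄_i`, `s_i`, `q_⊤` (`.inr true`), `q_⊥` (`.inr false`). -/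
abbrev SnLoc (m : ℕ) : Type := (Fin m ⊕ (Fin m ⊕ Fin m)) ⊕ Bool
/-- variables of the instance: `x_i^j`, `y_i^j` (of the ambient family `i`),
and `z_k`. -/
abbrev SnVar (m n : ℕ) : Type := (Fin n ⊕ Fin n) ⊕ Fin m

variable {m n : ℕ}

def snA (i : Fin m) (j : Fin n) : SnAgt m n := .inl (.inl (i, j))
def snB (i : Fin m) (j : Fin n) : SnAgt m n := .inl (.inr (i, j))
def snC (k : Fin m) : SnAgt m n := .inr (.inl k)
def snD : SnAgt m n := .inr (.inr ())

def snQ (i : Fin m) : SnLoc m := .inl (.inl i)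
def snQbar (i : Fin m) : SnLoc m := .inl (.inr (.inl i))
def snS (i : Fin m) : SnLoc m := .inl (.inr (.inr i))
def snTop : SnLoc m := .inr true
def snBot : SnLoc m := .inr false

/-- substitution `x_i^j ← (A_i^j = 1)`, `y_i^j ← (B_i^j = 1)`,
`z_k ← (C_k = 1)`. -/
def snSubst (i : Fin m) : SnVar m n → MoveForm (SnAgt m n)
  | .inl (.inl j) => .isEq (snA i j) 1
  | .inl (.inr j) => .isEq (snB i j) 1
  | .inr k => .isEq (.inr (.inl k)) 1

/-- the implicit CGS of the `Δ₃`-hardness reduction.  Atomic propositions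
(`Fin 3`): `0 = s_⊤` (labels `q_⊤`), `1 = s_⊥` (labels `q_⊥`), `2 = s`
(labels the states `s_i`).  The boolean agents always have the two moves
`{0, 1}`; `D` has the `m` moves `{0, …, m-1}`.  From `q_i`, if `D` plays `0`
the run goes to `q_⊤` or `q_⊥` according to the truth value of `φ_i` under the
moves of the boolean agents; if `D` plays `k + 1` with `k < i` it challenges
`C_k`, going to `q_k` if `C_k` plays `1` and to `q̄_k` otherwise; in the
remaining cases the run goes to `q_⊤`.  Moreover `q̄_i` goes to `s_i`, `s_i`
to `q_i`, and `q_⊤`, `q_⊥` carry self-loops. -/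
def snsat2ICGS (φ : Fin m → BForm (SnVar m n)) :
    ICGS (SnAgt m n) (SnLoc m) (Fin 3) where
  lab ℓ :=
    match ℓ with
    | .inr true => {(0 : Fin 3)}
    | .inr false => {(1 : Fin 3)}
    | .inl (.inr (.inr _)) => {(2 : Fin 3)}
    | _ => ∅
  chc _ ag :=
    match ag with
    | .inr (.inr _) => Finset.range m
    | _ => {0, 1}
  trans ℓ :=
    match ℓ with
    | .inl (.inl i) =>
        [(.conj (.isEq snD 0) ((φ i).subst (snSubst i)), snTop),
         (.isEq snD 0, snBot)]
        ++ ((List.finRange m).filter (fun (k : Fin m) => decide ((k : ℕ) < (i : ℕ)))).flatMap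
            (fun (k : Fin m) =>
              [(.conj (.isEq snD ((k : ℕ) + 1)) (.isEq (.inr (.inl k)) 1), snQ k),
               (.conj (.isEq snD ((k : ℕ) + 1)) (.isEq (.inr (.inl k)) 0), snQbar k)])
        ++ [(.tt, snTop)]
    | .inl (.inr (.inl i)) => [(.tt, snS i)]
    | .inl (.inr (.inr i)) => [(.tt, snQ i)]
    | .inr b => [(.tt, .inr b)]

/-- the coalition `Coal = {A_1^1, …, A_m^n, C_1, …, C_m}`. -/
def snCoal : Set (SnAgt m n) :=
  {ag | (∃ x, ag = .inl (.inl x)) ∨ ∃ k : Fin m, ag = .inr (.inl k)}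

/-- `E X θ  =  ⟨Agt⟩ X θ`. -/
def snEX (θ : SForm (SnAgt m n) (Fin 3)) : SForm (SnAgt m n) (Fin 3) :=
  .coal Set.univ (.nxt θ)

/-- the path formula `(¬s) U (s_⊤ ∨ EX(s ∧ EX ¬θ))`. -/
def snPsiPath (θ : SForm (SnAgt m n) (Fin 3)) : PForm (SnAgt m n) (Fin 3) :=
  .untl (.snot (.atom 2))
    (.sor (.atom 0) (snEX (SForm.sand (.atom 2) (snEX (.snot θ)))))

/-- the formulas `ψ_0 = ⊤`, `ψ_{k+1} = ⟨Coal⟩ (¬s) U (s_⊤ ∨ EX(s ∧ EX ¬ψ_k))`. -/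
def snPsi : ℕ → SForm (SnAgt m n) (Fin 3)
  | 0 => .tru
  | k + 1 => .coal snCoal (snPsiPath (snPsi k))

/-- the memoryless strategy `f_I` where every boolean agent of the coalition
plays according to the valuation `v_I` (given by `vz` on the `z_i` and `vx`
on the `x_i^j`). -/
def snFI (vz : Fin m → Bool) (vx : Fin m → Fin n → Bool) :
    GS.Strat (SnAgt m n) (SnLoc m) ℕ :=
  fun _ _ ag =>
    match ag with
    | .inl (.inl (i, j)) => if vx i j then 1 else 0
    | .inl (.inr _) => 0
    | .inr (.inl k) => if vz k then 1 else 0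
    | .inr (.inr _) => 0

/-! ### Auxiliary infrastructure for the proof -/

section Aux

variable {m n : ℕ}

/-- generic `find?` over a flatMap where only the block of `j` can fire. -/
lemma find?_flatMap_eq {α β : Type*} [DecidableEq α] (p : β → Bool) (L : List α)
    (f : α → List β) (j : α) (hj : j ∈ L)
    (hne : ∀ a ∈ L, a ≠ j → ∀ b ∈ f a, p b = false)
    (hsome : ((f j).find? p).isSome) :
    (L.flatMap f).find? p = (f j).find? p := by
  induction L with
  | nil => cases hj
  | cons a L ih =>
      rw [List.flatMap_cons, List.find?_append]
      by_cases ha : a = j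
      · subst ha
        obtain ⟨b, hb⟩ := Option.isSome_iff_exists.mp hsome
        simp [hb]
      · have hfa : (f a).find? p = none := by
          rw [List.find?_eq_none]
          intro b hb
          simpa using hne a (by simp) ha b hb
        have hjL : j ∈ L := by
          rcases List.mem_cons.mp hj with h | h
          · exact absurd h.symm ha
          · exact h
        rw [hfa, Option.none_or]
        exact ih hjL (fun a' ha' => hne a' (by simp [ha']))

variable (φ : Fin m → BForm (SnVar m n))

lemma sn_edg_qbar (i : Fin m) (mv : SnAgt m n → ℕ) :
    (snsat2ICGS φ).edg (snQbar i) mv = snS i := by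
  simp [ICGS.edg, snsat2ICGS, snQbar, MoveForm.eval, List.find?]

lemma sn_edg_s (i : Fin m) (mv : SnAgt m n → ℕ) :
    (snsat2ICGS φ).edg (snS i) mv = snQ i := by
  simp [ICGS.edg, snsat2ICGS, snS, MoveForm.eval, List.find?]

lemma sn_edg_sink (b : Bool) (mv : SnAgt m n → ℕ) :
    (snsat2ICGS φ).edg (.inr b) mv = .inr b := by
  simp [ICGS.edg, snsat2ICGS, MoveForm.eval, List.find?]

lemma sn_edg_q_zero (i : Fin m) (mv : SnAgt m n → ℕ) (h0 : mv snD = 0) :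
    (snsat2ICGS φ).edg (snQ i) mv
      = if ((φ i).subst (snSubst i)).eval mv then snTop else snBot := by
  have h0' : (mv snD == 0) = true := by simp [h0]
  by_cases hφ : ((φ i).subst (snSubst i)).eval mv
  · simp [ICGS.edg, snsat2ICGS, snQ, MoveForm.eval, List.find?, h0', hφ]
  · have hφ' : ((φ i).subst (snSubst i)).eval mv = false := by simpa using hφ
    simp [ICGS.edg, snsat2ICGS, snQ, MoveForm.eval, List.find?, h0', hφ']

end Aux
section Aux2
variable {m n : ℕ} (φ : Fin m → BForm (SnVar m n))

lemma sn_edg_q_chal (i k : Fin m) (hk : (k:ℕ) < (i:ℕ)) (mv : SnAgt m n → ℕ)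
    (hd : mv snD = (k:ℕ)+1) (hc : mv (snC k) = 0 ∨ mv (snC k) = 1) :
    (snsat2ICGS φ).edg (snQ i) mv = if mv (snC k) = 1 then snQ k else snQbar k := by
  classical
  set p : MoveForm (SnAgt m n) × SnLoc m → Bool := fun e => e.1.eval mv with hp
  set L : List (Fin m) :=
    (List.finRange m).filter (fun (k : Fin m) => decide ((k : ℕ) < (i : ℕ))) with hL
  set f : Fin m → List (MoveForm (SnAgt m n) × SnLoc m) := fun (k : Fin m) =>
      [(.conj (.isEq snD ((k : ℕ) + 1)) (.isEq (.inr (.inl k)) 1), snQ k),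
       (.conj (.isEq snD ((k : ℕ) + 1)) (.isEq (.inr (.inl k)) 0), snQbar k)] with hf
  have hd0 : (mv snD == 0) = false := by simp [hd]
  have hfk : (f k).find? p = some (if mv (snC k) = 1
      then (.conj (.isEq snD ((k : ℕ) + 1)) (.isEq (.inr (.inl k)) 1), snQ k)
      else (.conj (.isEq snD ((k : ℕ) + 1)) (.isEq (.inr (.inl k)) 0), snQbar k)) := by
    have hc' : mv (Sum.inr (Sum.inl k)) = mv (snC k) := rfl
    rcases hc with hc | hc <;> rw [hc] at hc'
    · rw [if_neg (by omega)]
      simp only [hf, hp, List.find?, MoveForm.eval, hd, hc', beq_self_eq_true, Bool.true_and]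
      rfl
    · rw [if_pos hc]
      simp only [hf, hp, List.find?, MoveForm.eval, hd, hc', beq_self_eq_true, Bool.true_and]
  have hmid : (L.flatMap f).find? p = (f k).find? p := by
    apply find?_flatMap_eq
    · exact List.mem_filter.mpr ⟨List.mem_finRange k, by simpa using hk⟩
    · intro a ha hne b hb
      have hval : (a : ℕ) + 1 ≠ (k : ℕ) + 1 := by
        intro h
        exact hne (Fin.val_injective (by omega))
      have : (mv snD == (a:ℕ)+1) = false := by simp [hd]; omega
      rcases List.mem_pair.mp hb with rfl | rfl <;>
        · simp only [hp, MoveForm.eval, this, Bool.false_and]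
    · rw [hfk]; rfl
  have htr : (snsat2ICGS φ).trans (snQ i)
      = ([(.conj (.isEq snD 0) ((φ i).subst (snSubst i)), snTop),
         (.isEq snD 0, snBot)] ++ (L.flatMap f ++ [(.tt, snTop)])) := by
    simp [snsat2ICGS, snQ, hL, hf]
  have hfind : ((snsat2ICGS φ).trans (snQ i)).find? p = (f k).find? p := by
    rw [htr, List.find?_append]
    have h1 : p (.conj (.isEq snD 0) ((φ i).subst (snSubst i)), snTop) = false := by
      simp [hp, MoveForm.eval, hd0]
    have h2 : p ((.isEq snD 0 : MoveForm (SnAgt m n)), snBot) = false := by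
      simp [hp, MoveForm.eval, hd0]
    rw [List.find?_cons_of_neg (by simp [h1]), List.find?_cons_of_neg (by simp [h2]),
      List.find?_nil, Option.none_or, List.find?_append, hmid, hfk]
    rfl
  rw [ICGS.edg, hfind, hfk]
  by_cases h1 : mv (snC k) = 1 <;> simp [h1]

lemma sn_edg_q_top (i : Fin m) (mv : SnAgt m n → ℕ) (hd : mv snD ≠ 0)
    (hd2 : ∀ k : Fin m, (k : ℕ) < (i : ℕ) → mv snD ≠ (k : ℕ) + 1) :
    (snsat2ICGS φ).edg (snQ i) mv = snTop := by
  classical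
  set p : MoveForm (SnAgt m n) × SnLoc m → Bool := fun e => e.1.eval mv with hp
  set L : List (Fin m) :=
    (List.finRange m).filter (fun (k : Fin m) => decide ((k : ℕ) < (i : ℕ))) with hL
  set f : Fin m → List (MoveForm (SnAgt m n) × SnLoc m) := fun (k : Fin m) =>
      [(.conj (.isEq snD ((k : ℕ) + 1)) (.isEq (.inr (.inl k)) 1), snQ k),
       (.conj (.isEq snD ((k : ℕ) + 1)) (.isEq (.inr (.inl k)) 0), snQbar k)] with hf
  have hd0 : (mv snD == 0) = false := by simp [hd]
  have hmid : (L.flatMap f).find? p = none := by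
    rw [List.find?_eq_none]
    intro b hb
    obtain ⟨a, ha, hb⟩ := List.mem_flatMap.mp hb
    have ha' : (a : ℕ) < (i : ℕ) := by
      have := (List.mem_filter.mp ha).2
      simpa using this
    have : (mv snD == (a:ℕ)+1) = false := by
      simp; exact hd2 a ha'
    rcases List.mem_pair.mp hb with rfl | rfl <;>
      · simp only [hp, MoveForm.eval, this, Bool.false_and]
        exact Bool.false_ne_true
  have htr : (snsat2ICGS φ).trans (snQ i)
      = ([(.conj (.isEq snD 0) ((φ i).subst (snSubst i)), snTop),
         (.isEq snD 0, snBot)] ++ (L.flatMap f ++ [(.tt, snTop)])) := by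
    simp [snsat2ICGS, snQ, hL, hf]
  have hfind : ((snsat2ICGS φ).trans (snQ i)).find? p = some (.tt, snTop) := by
    rw [htr, List.find?_append]
    rw [List.find?_cons_of_neg (by simp [hp, MoveForm.eval, hd0]),
      List.find?_cons_of_neg (by simp [hp, MoveForm.eval, hd0]),
      List.find?_nil, Option.none_or, List.find?_append, hmid, Option.none_or]
    simp [hp, List.find?, MoveForm.eval]
  rw [ICGS.edg, hfind]

end Aux2
section Aux3
variable {m n : ℕ}

/-- evaluation of a substituted formula. -/
lemma sn_subst_eval (i : Fin m) (ψ : BForm (SnVar m n)) (mv : SnAgt m n → ℕ) :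
    (ψ.subst (snSubst i)).eval mv = ψ.eval (fun v => (snSubst i v).eval mv) := by
  induction ψ with
  | var v => rfl
  | bnot ψ ih => simp [BForm.subst, BForm.eval, MoveForm.eval, ih]
  | band ψ χ ih1 ih2 => simp [BForm.subst, BForm.eval, MoveForm.eval, ih1, ih2]
  | bor ψ χ ih1 ih2 => simp [BForm.subst, BForm.eval, MoveForm.eval, ih1, ih2]

lemma beval_congr {V : Type} (ψ : BForm V) {g g' : V → Bool} (h : ∀ v, g v = g' v) :
    ψ.eval g = ψ.eval g' := by
  have : g = g' := funext h
  rw [this]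

variable (φ : Fin m → BForm (SnVar m n))

/-- validity of a joint move. -/
lemma sn_valid (mv : SnAgt m n → ℕ) (ℓ : SnLoc m)
    (h1 : ∀ p, mv (.inl p) = 0 ∨ mv (.inl p) = 1)
    (h2 : ∀ k : Fin m, mv (snC k) = 0 ∨ mv (snC k) = 1)
    (h3 : mv snD < m) :
    (snsat2ICGS φ).toGS.ValidMove ℓ mv := by
  intro a
  rcases a with p | (k | u)
  · rcases h1 p with h | h <;>
      simp [ICGS.toGS, ICGS.toCGS, CGS.toGS, snsat2ICGS, h]
  · rcases h2 k with h | h <;>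
      · have : mv (.inr (.inl k)) = mv (snC k) := rfl
        rw [h] at this
        simp [ICGS.toGS, ICGS.toCGS, CGS.toGS, snsat2ICGS, this]
  · cases u
    have : mv (.inr (.inr ())) = mv snD := rfl
    rw [this]
    simp [ICGS.toGS, ICGS.toCGS, CGS.toGS, snsat2ICGS, h3]

/-- moves of a valid joint move. -/
lemma sn_valid_elim (mv : SnAgt m n → ℕ) (ℓ : SnLoc m)
    (h : (snsat2ICGS φ).toGS.ValidMove ℓ mv) :
    (∀ p, mv (.inl p) = 0 ∨ mv (.inl p) = 1) ∧
    (∀ k : Fin m, mv (snC k) = 0 ∨ mv (snC k) = 1) ∧ mv snD < m := by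
  refine ⟨fun p => ?_, fun k => ?_, ?_⟩
  · have := h (.inl p)
    simpa [ICGS.toGS, ICGS.toCGS, CGS.toGS, snsat2ICGS] using this
  · have := h (.inr (.inl k))
    simpa [ICGS.toGS, ICGS.toCGS, CGS.toGS, snsat2ICGS, snC] using this
  · have := h (.inr (.inr ()))
    simpa [ICGS.toGS, ICGS.toCGS, CGS.toGS, snsat2ICGS, snD] using this

/-- override the non-coalition moves of `f` by `g`. -/
def snOvr (g f : SnAgt m n → ℕ) : SnAgt m n → ℕ := fun a =>
  match a with
  | .inl (.inl p) => f (.inl (.inl p))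
  | .inr (.inl k) => f (.inr (.inl k))
  | a => g a

lemma snOvr_coal (g f : SnAgt m n → ℕ) (a : SnAgt m n) (ha : a ∈ snCoal) :
    snOvr g f a = f a := by
  rcases ha with ⟨x, rfl⟩ | ⟨k, rfl⟩ <;> rfl

lemma snOvr_A (g f : SnAgt m n → ℕ) (i : Fin m) (j : Fin n) :
    snOvr g f (snA i j) = f (snA i j) := rfl

lemma snOvr_C (g f : SnAgt m n → ℕ) (k : Fin m) :
    snOvr g f (snC k) = f (snC k) := rfl

lemma snOvr_B (g f : SnAgt m n → ℕ) (i : Fin m) (j : Fin n) :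
    snOvr g f (snB i j) = g (snB i j) := rfl

lemma snOvr_D (g f : SnAgt m n → ℕ) : snOvr g f snD = g snD := rfl

/-- the run driven by the joint-move selector `E`. -/
def snRunP (G : ICGS (SnAgt m n) (SnLoc m) (Fin 3))
    (E : List (SnLoc m) → SnLoc m → SnAgt m n → ℕ) (ℓ0 : SnLoc m) :
    ℕ → List (SnLoc m) × SnLoc m
  | 0 => ([], ℓ0)
  | t + 1 =>
      let p := snRunP G E ℓ0 t
      (p.1 ++ [p.2], G.edg p.2 (E p.1 p.2))

def snRun (G : ICGS (SnAgt m n) (SnLoc m) (Fin 3))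
    (E : List (SnLoc m) → SnLoc m → SnAgt m n → ℕ) (ℓ0 : SnLoc m) (t : ℕ) : SnLoc m :=
  (snRunP G E ℓ0 t).2

lemma snRun_zero (G E ℓ0) : snRun (m := m) (n := n) G E ℓ0 0 = ℓ0 := rfl

lemma snRunP_fst (G E ℓ0) (t : ℕ) :
    (snRunP (m := m) (n := n) G E ℓ0 t).1 = GS.hist (snRun G E ℓ0) t := by
  induction t with
  | zero => simp [snRunP, GS.hist]
  | succ t ih =>
      show (snRunP G E ℓ0 t).1 ++ [(snRunP G E ℓ0 t).2] = _
      rw [ih]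
      rw [GS.hist, GS.hist, List.ofFn_succ']
      simp [snRun]

lemma snRun_succ (G E ℓ0) (t : ℕ) :
    snRun (m := m) (n := n) G E ℓ0 (t+1)
      = G.edg (snRun G E ℓ0 t) (E (GS.hist (snRun G E ℓ0) t) (snRun G E ℓ0 t)) := by
  show (snRunP G E ℓ0 (t+1)).2 = _
  rw [snRunP]
  simp only []
  rw [snRunP_fst]
  rfl

/-- the run is an outcome of `F`, provided `E` is valid and agrees with `F` on `A`. -/
lemma snRun_out (E : List (SnLoc m) → SnLoc m → SnAgt m n → ℕ) (ℓ0 : SnLoc m)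
    (A : Set (SnAgt m n)) (F : GS.Strat (SnAgt m n) (SnLoc m) ℕ)
    (hval : ∀ h ℓ, (snsat2ICGS φ).toGS.ValidMove ℓ (E h ℓ))
    (hagr : ∀ h ℓ a, a ∈ A → E h ℓ a = F h ℓ a) :
    (snsat2ICGS φ).toGS.Out A ℓ0 F (snRun (snsat2ICGS φ) E ℓ0) := by
  refine ⟨rfl, fun t => ?_⟩
  refine ⟨E (GS.hist (snRun (snsat2ICGS φ) E ℓ0) t) (snRun (snsat2ICGS φ) E ℓ0 t),
    hval _ _, fun a ha => hagr _ _ a ha, ?_⟩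
  rw [snRun_succ]
  rfl

/-- a step of an outcome: there is a valid joint move agreeing with `F`
realizing it. -/
lemma sn_next_elim {ℓ : SnLoc m} {A : Set (SnAgt m n)} {mA : SnAgt m n → ℕ} {ℓ' : SnLoc m}
    (h : ℓ' ∈ (snsat2ICGS φ).toGS.Next ℓ A mA) :
    ∃ mv, (snsat2ICGS φ).toGS.ValidMove ℓ mv ∧ (∀ a ∈ A, mv a = mA a) ∧
      ℓ' = (snsat2ICGS φ).edg ℓ mv := by
  obtain ⟨mv, h1, h2, h3⟩ := h
  exact ⟨mv, h1, h2, h3⟩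

end Aux3
section Aux4
variable {m n : ℕ} (φ : Fin m → BForm (SnVar m n))

lemma sn_lab_q (i : Fin m) : (snsat2ICGS (n := n) φ).toGS.lab (snQ i) = ∅ := rfl
lemma sn_lab_qbar (i : Fin m) : (snsat2ICGS (n := n) φ).toGS.lab (snQbar i) = ∅ := rfl
lemma sn_lab_s (i : Fin m) : (snsat2ICGS (n := n) φ).toGS.lab (snS i) = {(2 : Fin 3)} := rfl
lemma sn_lab_top : (snsat2ICGS (n := n) φ).toGS.lab snTop = {(0 : Fin 3)} := rfl
lemma sn_lab_bot : (snsat2ICGS (n := n) φ).toGS.lab snBot = {(1 : Fin 3)} := rfl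

/-- every successor of `q_i` is `q_⊤`, `q_⊥`, some `q_k` or some `q̄_k`. -/
lemma sn_edg_q_shape (i : Fin m) (mv : SnAgt m n → ℕ) :
    (snsat2ICGS φ).edg (snQ i) mv = snTop ∨ (snsat2ICGS φ).edg (snQ i) mv = snBot ∨
    (∃ k, (snsat2ICGS φ).edg (snQ i) mv = snQ k) ∨
    (∃ k, (snsat2ICGS φ).edg (snQ i) mv = snQbar k) := by
  rw [ICGS.edg]
  rcases hf : ((snsat2ICGS φ).trans (snQ i)).find? (fun e => e.1.eval mv) with _ | e <;>
    rw [hf]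
  · exact Or.inr (Or.inr (Or.inl ⟨i, rfl⟩))
  · have hmem := List.mem_of_find?_eq_some hf
    have htr : (snsat2ICGS φ).trans (snQ i)
        = ([(.conj (.isEq snD 0) ((φ i).subst (snSubst i)), snTop),
           (.isEq snD 0, snBot)]
          ++ (((List.finRange m).filter
                (fun (k : Fin m) => decide ((k : ℕ) < (i : ℕ)))).flatMap
              (fun (k : Fin m) =>
                [(.conj (.isEq snD ((k : ℕ) + 1)) (.isEq (.inr (.inl k)) 1), snQ k),
                 (.conj (.isEq snD ((k : ℕ) + 1)) (.isEq (.inr (.inl k)) 0), snQbar k)])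
              ++ [(.tt, snTop)])) := by
      simp [snsat2ICGS, snQ]
    rw [htr] at hmem
    simp only [List.mem_append, List.mem_cons, List.not_mem_nil, or_false,
      List.mem_flatMap, List.mem_singleton] at hmem
    rcases hmem with (rfl | rfl) | (⟨k, _, hk⟩ | rfl)
    · exact Or.inl rfl
    · exact Or.inr (Or.inl rfl)
    · rcases hk with rfl | rfl
      · exact Or.inr (Or.inr (Or.inl ⟨k, rfl⟩))
      · exact Or.inr (Or.inr (Or.inr ⟨k, rfl⟩))
    · exact Or.inl rfl

lemma sn_edg_q_no_s (i : Fin m) (mv : SnAgt m n → ℕ) :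
    (2 : Fin 3) ∉ (snsat2ICGS φ).toGS.lab ((snsat2ICGS φ).edg (snQ i) mv) := by
  rcases sn_edg_q_shape φ i mv with h | h | ⟨k, h⟩ | ⟨k, h⟩ <;> rw [h] <;>
    simp [sn_lab_top, sn_lab_bot, sn_lab_q, sn_lab_qbar]

/-- introduction rule for `EX`. -/
lemma sn_ex_intro (θ : SForm (SnAgt m n) (Fin 3)) (ℓ : SnLoc m) (mv : SnAgt m n → ℕ)
    (hval : ∀ ℓ', (snsat2ICGS φ).toGS.ValidMove ℓ' mv)
    (hθ : SSat (snsat2ICGS φ).toGS θ ((snsat2ICGS φ).edg ℓ mv)) :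
    SSat (snsat2ICGS φ).toGS (snEX θ) ℓ := by
  refine ⟨fun _ _ => mv, fun h ℓ' a _ => hval ℓ' a, fun ρ hρ => ?_⟩
  obtain ⟨h0, hstep⟩ := hρ
  obtain ⟨mv', _, hagr, hloc⟩ := hstep 0
  have hmv : mv' = mv := funext fun a => hagr a trivial
  show SSat (snsat2ICGS φ).toGS θ (ρ 1)
  have : ρ 1 = (snsat2ICGS φ).edg (ρ 0) mv' := hloc
  rw [this, hmv, h0]
  exact hθ

/-- elimination rule for `EX`. -/
lemma sn_ex_elim (θ : SForm (SnAgt m n) (Fin 3)) (ℓ : SnLoc m)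
    (h : SSat (snsat2ICGS φ).toGS (snEX θ) ℓ) :
    ∃ mv, (snsat2ICGS φ).toGS.ValidMove ℓ mv ∧
      SSat (snsat2ICGS φ).toGS θ ((snsat2ICGS φ).edg ℓ mv) := by
  obtain ⟨F, hv, hall⟩ := h
  have hout := snRun_out φ (fun h ℓ => F h ℓ) ℓ Set.univ F
    (fun h ℓ => fun a => hv h ℓ a trivial) (fun _ _ _ _ => rfl)
  have := hall _ hout
  refine ⟨F [] ℓ, fun a => hv [] ℓ a trivial, ?_⟩
  have h1 : snRun (snsat2ICGS φ) (fun h ℓ => F h ℓ) ℓ 1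
      = (snsat2ICGS φ).edg ℓ (F [] ℓ) := by
    rw [snRun_succ]
    simp [GS.hist, snRun_zero]
  rw [← h1]
  exact this

/-- failure of the right-hand side `s_⊤ ∨ EX(s ∧ EX ¬θ)` of the until. -/
lemma sn_rhs_fail (θ : SForm (SnAgt m n) (Fin 3)) (ℓ : SnLoc m)
    (h0 : (0 : Fin 3) ∉ (snsat2ICGS φ).toGS.lab ℓ)
    (hsucc : ∀ mv, (2 : Fin 3) ∉ (snsat2ICGS φ).toGS.lab ((snsat2ICGS φ).edg ℓ mv)) :
    ¬ SSat (snsat2ICGS φ).toGS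
      (.sor (.atom 0) (snEX (SForm.sand (.atom 2) (snEX (.snot θ))))) ℓ := by
  rintro (h | h)
  · exact h0 h
  · obtain ⟨mv, hv, hs⟩ := sn_ex_elim φ _ _ h
    have : SSat (snsat2ICGS φ).toGS (.atom 2) ((snsat2ICGS φ).edg ℓ mv) := by
      by_contra hc
      exact hs (Or.inl hc)
    exact hsucc mv this

end Aux4
section Aux5
variable {m n : ℕ} (φ : Fin m → BForm (SnVar m n))

lemma sn_ite_beq (b : Bool) : ((if b = true then (1 : ℕ) else 0) == 1) = b := by
  cases b <;> rfl

lemma snA_mem_coal (i : Fin m) (j : Fin n) : snA i j ∈ (snCoal : Set (SnAgt m n)) :=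
  Or.inl ⟨(i, j), rfl⟩

lemma snC_mem_coal (k : Fin m) : snC k ∈ (snCoal : Set (SnAgt m n)) :=
  Or.inr ⟨k, rfl⟩

/-- validity of an overridden coalition move. -/
lemma sn_ovr_valid (F : GS.Strat (SnAgt m n) (SnLoc m) ℕ)
    (hvF : (snsat2ICGS φ).toGS.StratValid snCoal F) (h' : List (SnLoc m)) (ℓ ℓ' : SnLoc m)
    (g : SnAgt m n → ℕ)
    (hg1 : ∀ p : Fin m × Fin n, g (.inl (.inr p)) = 0 ∨ g (.inl (.inr p)) = 1)
    (hgD : g snD < m) :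
    (snsat2ICGS φ).toGS.ValidMove ℓ' (snOvr g (F h' ℓ)) := by
  apply sn_valid
  · rintro (x | x)
    · have := hvF h' ℓ _ (snA_mem_coal x.1 x.2)
      simpa [ICGS.toGS, ICGS.toCGS, CGS.toGS, snsat2ICGS, snOvr, snA] using this
    · simpa [snOvr] using hg1 x
  · intro k
    have := hvF h' ℓ _ (snC_mem_coal k)
    simpa [ICGS.toGS, ICGS.toCGS, CGS.toGS, snsat2ICGS, snOvr, snC] using this
  · simpa [snOvr, snD] using hgD

/-- validity of the strategy `f_I`. -/
lemma sn_fI_valid (vz : Fin m → Bool) (vx : Fin m → Fin n → Bool) :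
    (snsat2ICGS (n := n) φ).toGS.StratValid snCoal (snFI vz vx) := by
  intro h ℓ a ha
  rcases ha with ⟨⟨i, j⟩, rfl⟩ | ⟨k, rfl⟩
  · by_cases hv : vx i j <;>
      simp [ICGS.toGS, ICGS.toCGS, CGS.toGS, snsat2ICGS, snFI, hv]
  · by_cases hv : vz k <;>
      simp [ICGS.toGS, ICGS.toCGS, CGS.toGS, snsat2ICGS, snFI, snC, hv]

/-- the key positive lemma: from `q_j` with `vz j = true`, any `f_I`-outcome
reaches `q_⊤` or some `q̄_{j'}` with `vz j' = false`, passing only through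
`q`-states. -/
lemma sn_pos (vz : Fin m → Bool) (vx : Fin m → Fin n → Bool)
    (hx : ∀ i : Fin m, vz i = true → ∀ gy : Fin n → Bool,
      (φ i).eval (fun v =>
        match v with
        | .inl (.inl j) => vx i j
        | .inl (.inr j) => gy j
        | .inr k => vz k) = true) :
    ∀ N, ∀ j : Fin m, (j : ℕ) < N → vz j = true →
    ∀ ρ : ℕ → SnLoc m, ρ 0 = snQ j →
    (∀ t, ρ (t+1) ∈ (snsat2ICGS φ).toGS.Next (ρ t) snCoal
        (snFI vz vx (GS.hist ρ t) (ρ t))) →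
    ∃ t, (ρ t = snTop ∨
        ∃ j' : Fin m, (j' : ℕ) < (j : ℕ) ∧ ρ t = snQbar j' ∧ vz j' = false) ∧
      ∀ t' < t, ∃ j'' : Fin m, ρ t' = snQ j'' := by
  intro N
  induction N with
  | zero => intro j hj; omega
  | succ N ih =>
      intro j hj hvz ρ h0 hstep
      obtain ⟨mv, hval, hagr, heq⟩ := sn_next_elim φ (hstep 0)
      rw [h0] at heq
      have hA : ∀ l : Fin n, mv (snA j l) = if vx j l then 1 else 0 :=
        fun l => hagr _ (snA_mem_coal j l)
      have hC : ∀ k : Fin m, mv (snC k) = if vz k then 1 else 0 :=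
        fun k => hagr _ (snC_mem_coal k)
      by_cases hd0 : mv snD = 0
      · -- evaluation of φ_j: true, go to q_⊤
        have heval : ((φ j).subst (snSubst j)).eval mv = true := by
          rw [sn_subst_eval]
          rw [beval_congr (φ j) (g' := fun v =>
            match v with
            | .inl (.inl l) => vx j l
            | .inl (.inr l) => (mv (snB j l) == 1)
            | .inr k => vz k)]
          · exact hx j hvz _
          · rintro ((l | l) | k)
            · show (mv (snA j l) == 1) = _
              rw [hA l]; exact sn_ite_beq _
            · rfl
            · show (mv (snC k) == 1) = _
              rw [hC k]; exact sn_ite_beq _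
        rw [sn_edg_q_zero φ j mv hd0, heval] at heq
        refine ⟨1, Or.inl (by simpa using heq), ?_⟩
        intro t' ht'
        interval_cases t'
        exact ⟨j, h0⟩
      · by_cases hex : ∃ k : Fin m, (k : ℕ) < (j : ℕ) ∧ mv snD = (k : ℕ) + 1
        · obtain ⟨k, hkj, hdk⟩ := hex
          rw [sn_edg_q_chal φ j k hkj mv hdk (by rw [hC k]; by_cases h : vz k <;> simp [h])]
            at heq
          by_cases hvzk : vz k = true
          · have hck : mv (snC k) = 1 := by rw [hC k, hvzk]; rfl
            rw [if_pos hck] at heq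
            obtain ⟨t, htgt, hpre⟩ := ih k (by omega) hvzk (fun t => ρ (t+1))
              heq (fun t => hstep (t+1))
            refine ⟨t+1, ?_, ?_⟩
            · rcases htgt with h | ⟨j', hj', h1, h2⟩
              · exact Or.inl h
              · exact Or.inr ⟨j', by omega, h1, h2⟩
            · rintro (_ | t') ht'
              · exact ⟨j, h0⟩
              · exact hpre t' (by omega)
          · have hck : mv (snC k) = 0 := by
              rw [hC k, if_neg hvzk]
            rw [if_neg (by omega)] at heq
            refine ⟨1, Or.inr ⟨k, hkj, heq, by simpa using hvzk⟩, ?_⟩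
            intro t' ht'
            interval_cases t'
            exact ⟨j, h0⟩
        · push_neg at hex
          rw [sn_edg_q_top φ j mv hd0 (fun k hk => hex k hk)] at heq
          refine ⟨1, Or.inl heq, ?_⟩
          intro t' ht'
          interval_cases t'
          exact ⟨j, h0⟩

end Aux5
section Aux6
variable {m n : ℕ} (φ : Fin m → BForm (SnVar m n))

lemma sn_hist_zero (ρ : ℕ → SnLoc m) : GS.hist ρ 0 = [] := by
  simp [GS.hist]

/-- construct an outcome of `F` from `q_i` whose first move is
`snOvr g (F [] (q_i))` and which subsequently uses default adversary moves. -/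
lemma sn_mkrun (hm : 0 < m) (i : Fin m) (F : GS.Strat (SnAgt m n) (SnLoc m) ℕ)
    (hvF : (snsat2ICGS φ).toGS.StratValid snCoal F) (g : SnAgt m n → ℕ)
    (hg1 : ∀ p : Fin m × Fin n, g (.inl (.inr p)) = 0 ∨ g (.inl (.inr p)) = 1)
    (hgD : g snD < m) :
    ∃ ρ : ℕ → SnLoc m, (snsat2ICGS φ).toGS.Out snCoal (snQ i) F ρ ∧
      ρ 0 = snQ i ∧ ρ 1 = (snsat2ICGS φ).edg (snQ i) (snOvr g (F [] (snQ i))) ∧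
      ∀ t, ∃ mv, ρ (t+2) = (snsat2ICGS φ).edg (ρ (t+1)) mv := by
  classical
  set E : List (SnLoc m) → SnLoc m → SnAgt m n → ℕ := fun h ℓ =>
    if h.length = 0 then snOvr g (F h ℓ) else snOvr (fun _ => 0) (F h ℓ) with hE
  set ρ : ℕ → SnLoc m := snRun (snsat2ICGS φ) E (snQ i) with hρ
  have hval : ∀ h ℓ, (snsat2ICGS φ).toGS.ValidMove ℓ (E h ℓ) := by
    intro h ℓ
    rw [hE]
    by_cases hl : h.length = 0 <;> simp only [hl, if_true, if_false, if_pos, if_neg,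
      reduceIte]
    · exact sn_ovr_valid φ F hvF h ℓ ℓ g hg1 hgD
    · exact sn_ovr_valid φ F hvF h ℓ ℓ _ (fun p => Or.inl rfl) hm
  have hagr : ∀ h ℓ a, a ∈ snCoal → E h ℓ a = F h ℓ a := by
    intro h ℓ a ha
    rw [hE]
    by_cases hl : h.length = 0 <;>
      simp only [hl, reduceIte] <;> exact snOvr_coal _ _ a ha
  refine ⟨ρ, snRun_out φ E (snQ i) snCoal F hval hagr, rfl, ?_, ?_⟩
  · have := snRun_succ (snsat2ICGS φ) E (snQ i) 0
    rw [← hρ] at this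
    rw [this, sn_hist_zero]
    simp [hE, snRun_zero, hρ]
  · intro t
    refine ⟨E (GS.hist ρ (t+1)) (ρ (t+1)), ?_⟩
    have := snRun_succ (snsat2ICGS φ) E (snQ i) (t+1)
    rw [← hρ] at this
    exact this

/-- a run stuck at `q_⊥` (after an initial `q_i`) violates the until formula. -/
lemma sn_bot_run_not_until (θ : SForm (SnAgt m n) (Fin 3)) (i : Fin m) (ρ : ℕ → SnLoc m)
    (h0 : ρ 0 = snQ i) (hb : ∀ t, ρ (t+1) = snBot) :
    ¬ PSat (snsat2ICGS φ).toGS (snPsiPath θ) ρ := by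
  rintro ⟨t, hR, hpre⟩
  cases t with
  | zero =>
      rw [h0] at hR
      exact sn_rhs_fail φ θ (snQ i) (by rw [sn_lab_q]; exact not_false)
        (fun mv => sn_edg_q_no_s φ i mv) hR
  | succ t =>
      rw [hb t] at hR
      refine sn_rhs_fail φ θ snBot ?_ ?_ hR
      · rw [sn_lab_bot]; simp
      · intro mv
        rw [show (snsat2ICGS φ).edg snBot mv = snBot from sn_edg_sink φ false mv,
          sn_lab_bot]
        simp

end Aux6
section Aux7
variable {m n : ℕ} (φ : Fin m → BForm (SnVar m n))

lemma sn_strat_c01 (F : GS.Strat (SnAgt m n) (SnLoc m) ℕ)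
    (hvF : (snsat2ICGS φ).toGS.StratValid snCoal F) (h : List (SnLoc m)) (ℓ : SnLoc m)
    (k : Fin m) : F h ℓ (snC k) = 0 ∨ F h ℓ (snC k) = 1 := by
  have := hvF h ℓ _ (snC_mem_coal k)
  simpa [ICGS.toGS, ICGS.toCGS, CGS.toGS, snsat2ICGS, snC] using this

end Aux7

/-- For an SNSAT₂ instance (with `v_I` given by `vz`, `vx`; hypotheses `hdep`,
`hz`, `hx` state that `φ_i` only depends on `X_i ∪ Y_i ∪ {z_k | k < i}`, that
`vz` is the unique valuation solving the instance and that `vx i` witnesses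
`z_i` whenever `vz i = true`), for all `i ≤ m` and `k ≥ i`, the following are
equivalent: (a) `q_i ⊨ ψ_k`; (b) the strategies `f_I` witness `q_i ⊨ ψ_k`;
(c) `z_i` evaluates to `⊤` in `v_I`. -/
theorem snsat2_reduction_correct
    (m n : ℕ) (hm : 0 < m) (φ : Fin m → BForm (SnVar m n))
    (hdep : ∀ (i : Fin m) (g g' : SnVar m n → Bool),
      (∀ v : Fin n ⊕ Fin n, g (.inl v) = g' (.inl v)) →
      (∀ k : Fin m, (k : ℕ) < (i : ℕ) → g (.inr k) = g' (.inr k)) →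
      (φ i).eval g = (φ i).eval g')
    (vz : Fin m → Bool) (vx : Fin m → Fin n → Bool)
    (hz : ∀ i : Fin m, vz i = true ↔
      ∃ gx : Fin n → Bool, ∀ gy : Fin n → Bool,
        (φ i).eval (fun v =>
          match v with
          | .inl (.inl j) => gx j
          | .inl (.inr j) => gy j
          | .inr k => vz k) = true)
    (hx : ∀ i : Fin m, vz i = true → ∀ gy : Fin n → Bool,
      (φ i).eval (fun v =>
        match v with
        | .inl (.inl j) => vx i j
        | .inl (.inr j) => gy j
        | .inr k => vz k) = true) :
    ∀ (i : Fin m) (k : ℕ), (i : ℕ) ≤ k →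
      ((SSat (snsat2ICGS φ).toGS (snPsi (k + 1)) (snQ i) ↔ vz i = true) ∧
       (((snsat2ICGS φ).toGS.StratValid snCoal (snFI vz vx) ∧
          ∀ ρ : ℕ → SnLoc m,
            (snsat2ICGS φ).toGS.Out snCoal (snQ i) (snFI vz vx) ρ →
              PSat (snsat2ICGS φ).toGS (snPsiPath (snPsi k)) ρ) ↔
        vz i = true)) := by
  suffices H : ∀ N : ℕ, ∀ i : Fin m, (i : ℕ) < N → ∀ k : ℕ, (i : ℕ) ≤ k →
      ((SSat (snsat2ICGS φ).toGS (snPsi (k + 1)) (snQ i) ↔ vz i = true) ∧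
       (((snsat2ICGS φ).toGS.StratValid snCoal (snFI vz vx) ∧
          ∀ ρ : ℕ → SnLoc m,
            (snsat2ICGS φ).toGS.Out snCoal (snQ i) (snFI vz vx) ρ →
              PSat (snsat2ICGS φ).toGS (snPsiPath (snPsi k)) ρ) ↔
        vz i = true)) by
    exact fun i k hk => H ((i : ℕ) + 1) i (by omega) k hk
  intro N
  induction N with
  | zero => intro i hi; omega
  | succ N ih =>
    intro i hiN k hik
    have hB : ((snsat2ICGS φ).toGS.StratValid snCoal (snFI vz vx) ∧
          ∀ ρ : ℕ → SnLoc m,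
            (snsat2ICGS φ).toGS.Out snCoal (snQ i) (snFI vz vx) ρ →
              PSat (snsat2ICGS φ).toGS (snPsiPath (snPsi k)) ρ) ↔ vz i = true := by
      constructor
      · rintro ⟨hv, hwin⟩
        by_contra hvz
        have hvz' : vz i = false := by simpa using hvz
        have hng : ¬ ∃ gx : Fin n → Bool, ∀ gy : Fin n → Bool,
            (φ i).eval (fun v => match v with
              | .inl (.inl j) => gx j
              | .inl (.inr j) => gy j
              | .inr k => vz k) = true := by
          rw [← hz i]; simp [hvz']
        push_neg at hng
        obtain ⟨gy, hgy⟩ := hng (vx i)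
        have hgy' : (φ i).eval (fun v => match v with
              | .inl (.inl j) => vx i j
              | .inl (.inr j) => gy j
              | .inr k => vz k) = false := by simpa using hgy
        set g : SnAgt m n → ℕ := fun a => match a with
          | .inl (.inr p) => if gy p.2 then 1 else 0
          | _ => 0 with hg
        have hbot : (snsat2ICGS φ).edg (snQ i) (snOvr g (snFI vz vx [] (snQ i))) = snBot := by
          rw [sn_edg_q_zero φ i _ rfl]
          rw [if_neg]
          rw [sn_subst_eval]
          rw [beval_congr (φ i) (g' := fun v => match v with
              | .inl (.inl j) => vx i j
              | .inl (.inr j) => gy j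
              | .inr k => vz k)]
          · simp [hgy']
          · rintro ((l | l) | kk)
            · show (snOvr g (snFI vz vx [] (snQ i)) (snA i l) == 1) = vx i l
              rw [snOvr_A]
              exact sn_ite_beq _
            · show (g (snB i l) == 1) = gy l
              exact sn_ite_beq _
            · show (snOvr g (snFI vz vx [] (snQ i)) (snC kk) == 1) = vz kk
              rw [snOvr_C]
              exact sn_ite_beq _
        obtain ⟨ρ, hout, h0, h1, hsucc⟩ := sn_mkrun φ hm i (snFI vz vx)
          (sn_fI_valid φ vz vx) g (fun p => by by_cases h : gy p.2 <;> simp [hg, h])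
          (by simp [hg]; exact hm)
        have hbots : ∀ t, ρ (t + 1) = snBot := by
          intro t
          induction t with
          | zero => rw [h1, hbot]
          | succ t iht =>
              obtain ⟨mv, hmv⟩ := hsucc t
              rw [hmv, iht]
              exact sn_edg_sink φ false mv
        exact sn_bot_run_not_until φ (snPsi k) i ρ h0 hbots (hwin ρ hout)
      · intro hvz
        refine ⟨sn_fI_valid φ vz vx, fun ρ hout => ?_⟩
        obtain ⟨h0, hstep⟩ := hout
        obtain ⟨t, htgt, hpre⟩ := sn_pos φ vz vx hx ((i : ℕ) + 1) i (by omega) hvz ρ h0 hstep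
        refine ⟨t, ?_, fun t' ht' => ?_⟩
        · rcases htgt with h | ⟨j', hj', hq, hvj'⟩
          · left
            rw [show ρ t = snTop from h]
            rfl
          · right
            rw [hq]
            apply sn_ex_intro φ _ _ (fun _ => 0)
              (fun ℓ' => sn_valid φ _ ℓ' (fun p => Or.inl rfl) (fun k => Or.inl rfl) hm)
            rw [sn_edg_qbar]
            rintro (hcon | hcon)
            · exact hcon rfl
            · apply hcon
              apply sn_ex_intro φ _ _ (fun _ => 0)
                (fun ℓ' => sn_valid φ _ ℓ' (fun p => Or.inl rfl) (fun k => Or.inl rfl) hm)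
              rw [sn_edg_s]
              obtain ⟨k', rfl⟩ : ∃ k', k = k' + 1 := ⟨k - 1, by omega⟩
              intro hsat
              have := ((ih j' (by omega) k' (by omega)).1).mp hsat
              rw [hvj'] at this
              exact Bool.false_ne_true this
        · obtain ⟨j'', hq⟩ := hpre t' ht'
          show ¬ _
          rw [hq]
          intro hcon
          exact hcon
    refine ⟨?_, hB⟩
    constructor
    · rintro ⟨F, hvF, hwin⟩
      have hCval : ∀ j : Fin m, (j : ℕ) < (i : ℕ) →
          (F [] (snQ i) (snC j) == 1) = vz j := by
        intro j hji
        rcases sn_strat_c01 φ F hvF [] (snQ i) j with hc | hc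
        · -- move 0 : show vz j = false
          by_contra hne
          have hvzj : vz j = true := by
            rw [hc] at hne
            cases hvzj : vz j
            · rw [hvzj] at hne; exact absurd rfl hne
            · rfl
          set g : SnAgt m n → ℕ := fun a => match a with
            | .inr (.inr _) => (j : ℕ) + 1
            | _ => 0 with hg
          have hqbar : (snsat2ICGS φ).edg (snQ i) (snOvr g (F [] (snQ i))) = snQbar j := by
            rw [sn_edg_q_chal φ i j hji _ rfl (Or.inl (by rw [snOvr_C]; exact hc))]
            rw [if_neg (by rw [snOvr_C, hc]; omega)]
          obtain ⟨ρ, hout, h0, h1, hsucc⟩ := sn_mkrun φ hm i F hvF g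
            (fun p => Or.inl rfl) (by show (j : ℕ) + 1 < m; omega)
          rw [hqbar] at h1
          obtain ⟨mv2, hmv2⟩ := hsucc 0
          rw [h1, sn_edg_qbar] at hmv2
          obtain ⟨mv3, hmv3⟩ := hsucc 1
          rw [hmv2, sn_edg_s] at hmv3
          obtain ⟨t, hR, hpre⟩ := hwin ρ hout
          obtain ⟨k', rfl⟩ : ∃ k', k = k' + 1 := ⟨k - 1, by omega⟩
          match t with
          | 0 =>
              rw [h0] at hR
              exact sn_rhs_fail φ _ (snQ i) (fun hcon => hcon) (sn_edg_q_no_s φ i) hR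
          | 1 =>
              rw [h1] at hR
              rcases hR with hcon | hcon
              · exact hcon
              · obtain ⟨mv, hvmv, hs⟩ := sn_ex_elim φ _ _ hcon
                rw [sn_edg_qbar] at hs
                have hEX : SSat (snsat2ICGS φ).toGS (snEX (.snot (snPsi (k' + 1)))) (snS j) := by
                  by_contra hc2
                  exact hs (Or.inr hc2)
                obtain ⟨mv', hvmv', hs'⟩ := sn_ex_elim φ _ _ hEX
                rw [sn_edg_s] at hs'
                exact hs' (((ih j (by omega) k' (by omega)).1).mpr hvzj)
          | 2 =>
              rw [hmv2] at hR
              rcases hR with hcon | hcon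
              · exact absurd hcon (fun hcc => (by decide : (0 : Fin 3) ≠ 2) hcc)
              · obtain ⟨mv, hvmv, hs⟩ := sn_ex_elim φ _ _ hcon
                rw [sn_edg_s] at hs
                have h2 : SSat (snsat2ICGS φ).toGS (.atom 2) (snQ j) := by
                  by_contra hc2
                  exact hs (Or.inl hc2)
                exact h2
          | (t + 3) =>
              have := hpre 2 (by omega)
              rw [hmv2] at this
              exact this rfl
        · rw [hc]
          have hSj : SSat (snsat2ICGS φ).toGS (snPsi (k + 1)) (snQ j) := by
            refine ⟨fun h ℓ => F (snQ i :: h) ℓ,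
              fun h ℓ a ha => hvF (snQ i :: h) ℓ a ha, fun ρ' hρ' => ?_⟩
            set ρ : ℕ → SnLoc m := fun t => match t with
              | 0 => snQ i
              | t + 1 => ρ' t with hρdef
            have hhist : ∀ t, GS.hist ρ (t + 1) = snQ i :: GS.hist ρ' t := by
              intro t
              rw [GS.hist, GS.hist, List.ofFn_succ]
              rfl
            have hout : (snsat2ICGS φ).toGS.Out snCoal (snQ i) F ρ := by
              refine ⟨rfl, fun t => ?_⟩
              match t with
              | 0 =>
                  rw [show GS.hist ρ 0 = [] from sn_hist_zero ρ]
                  refine ⟨snOvr (fun a => match a with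
                      | .inr (.inr _) => (j : ℕ) + 1
                      | _ => 0) (F [] (snQ i)),
                    sn_ovr_valid φ F hvF [] (snQ i) (snQ i) _ (fun p => Or.inl rfl)
                      (by show (j : ℕ) + 1 < m; omega),
                    fun a ha => snOvr_coal _ _ a ha, ?_⟩
                  show ρ 1 ∈ {(snsat2ICGS φ).edg (snQ i) _}
                  rw [sn_edg_q_chal φ i j hji _ rfl (Or.inr (by rw [snOvr_C]; exact hc))]
                  rw [if_pos (by rw [snOvr_C]; exact hc)]
                  show ρ' 0 ∈ ({snQ j} : Set (SnLoc m))
                  rw [hρ'.1]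
                  rfl
              | t + 1 =>
                  have hnx := hρ'.2 t
                  rw [hhist t]
                  exact hnx
            obtain ⟨t, hR, hpre⟩ := hwin ρ hout
            match t with
            | 0 =>
                exact absurd hR
                  (sn_rhs_fail φ _ (snQ i) (fun hcon => hcon) (sn_edg_q_no_s φ i))
            | t + 1 =>
                exact ⟨t, hR, fun s hs => hpre (s + 1) (by omega)⟩
          have := ((ih j (by omega) k (by omega)).1).mp hSj
          rw [this]
          rfl
      rw [hz i]
      refine ⟨fun l => (F [] (snQ i) (snA i l) == 1), fun gy => ?_⟩
      by_contra hgy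
      have hgy' : (φ i).eval (fun v => match v with
          | .inl (.inl l) => (F [] (snQ i) (snA i l) == 1)
          | .inl (.inr l) => gy l
          | .inr kk => vz kk) = false := by simpa using hgy
      set g : SnAgt m n → ℕ := fun a => match a with
        | .inl (.inr p) => if gy p.2 then 1 else 0
        | _ => 0 with hg
      have hbot : (snsat2ICGS φ).edg (snQ i) (snOvr g (F [] (snQ i))) = snBot := by
        rw [sn_edg_q_zero φ i _ rfl]
        rw [if_neg]
        rw [sn_subst_eval]
        rw [hdep i (fun v => (snSubst i v).eval (snOvr g (F [] (snQ i))))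
          (fun v => match v with
            | .inl (.inl l) => (F [] (snQ i) (snA i l) == 1)
            | .inl (.inr l) => gy l
            | .inr kk => vz kk) ?hxy ?hz']
        · simp [hgy']
        case hxy =>
          rintro (l | l)
          · show (snOvr g (F [] (snQ i)) (snA i l) == 1) = _
            rw [snOvr_A]
          · show (g (snB i l) == 1) = gy l
            exact sn_ite_beq _
        case hz' =>
          intro kk hkk
          show (snOvr g (F [] (snQ i)) (snC kk) == 1) = vz kk
          rw [snOvr_C]
          exact hCval kk hkk
      obtain ⟨ρ, hout, h0, h1, hsucc⟩ := sn_mkrun φ hm i F hvF g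
        (fun p => by by_cases h : gy p.2 <;> simp [hg, h]) (by simp [hg]; exact hm)
      have hbots : ∀ t, ρ (t + 1) = snBot := by
        intro t
        induction t with
        | zero => rw [h1, hbot]
        | succ t iht =>
            obtain ⟨mv, hmv⟩ := hsucc t
            rw [hmv, iht]
            exact sn_edg_sink φ false mv
      exact sn_bot_run_not_until φ (snPsi k) i ρ h0 hbots (hwin ρ hout)
    · intro hvz
      exact ⟨snFI vz vx, (hB.mpr hvz).1, (hB.mpr hvz).2⟩
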